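/- With N and A as in the block-Gauss decomposition G = N A Nᵀ (block sizes (n,r,n), A = diag(h, I_r, h⁻¹), N block lower unitriangular), the derivative satisfies G'G⁻¹ = X₁ + X₂ + X₃ where X₁ = N A (Nᵀ)' (Nᵀ)⁻¹ A⁻¹ N⁻¹, X₂ = N A' A⁻¹ N⁻¹, X₃ = N' N⁻¹, and moreover (1/2)tr((G'G⁻¹)²) = tr(X₁X₃) + (1/2)tr(X₂²). -/

import Mathlib

open Matrix

/-- Entrywise derivative of a matrix-valued function of a real variable. -/
noncomputable def matDeriv {m n : Type*} (f : ℝ → Matrix m n ℝ) (s : ℝ) : Matrix m n ℝ :=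
  Matrix.of fun i j => deriv (fun t => f t i j) s

/-- The block lower unitriangular matrix `N = [[I,0,0],[n₁ᵀ,I,0],[n₂ᵀ,-n₁,I]]`. -/
def Nmat {n r : ℕ} (n₁ : Matrix (Fin n) (Fin r) ℝ) (n₂ : Matrix (Fin n) (Fin n) ℝ) :
    Matrix (Fin n ⊕ (Fin r ⊕ Fin n)) (Fin n ⊕ (Fin r ⊕ Fin n)) ℝ :=
  Matrix.fromBlocks 1 0 (Matrix.fromRows n₁ᵀ n₂ᵀ) (Matrix.fromBlocks 1 0 (-n₁) 1)

/-- The block diagonal matrix `A = diag(h, I_r, h⁻¹)`. -/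
noncomputable def Amat {n r : ℕ} (h : Matrix (Fin n) (Fin n) ℝ) :
    Matrix (Fin n ⊕ (Fin r ⊕ Fin n)) (Fin n ⊕ (Fin r ⊕ Fin n)) ℝ :=
  Matrix.fromBlocks h 0 0 (Matrix.fromBlocks 1 0 0 h⁻¹)

/-! ### Auxiliary definitions and lemmas -/

section Aux

/-- Explicit inverse of `Nmat`. -/
def NmatInv {n r : ℕ} (n₁ : Matrix (Fin n) (Fin r) ℝ) (n₂ : Matrix (Fin n) (Fin n) ℝ) :
    Matrix (Fin n ⊕ (Fin r ⊕ Fin n)) (Fin n ⊕ (Fin r ⊕ Fin n)) ℝ :=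
  Matrix.fromBlocks 1 0 (Matrix.fromRows (-n₁ᵀ) (-(n₁ * n₁ᵀ) - n₂ᵀ)) (Matrix.fromBlocks 1 0 n₁ 1)

/-- Explicit inverse of `Amat`. -/
noncomputable def AmatInv {n r : ℕ} (h : Matrix (Fin n) (Fin n) ℝ) :
    Matrix (Fin n ⊕ (Fin r ⊕ Fin n)) (Fin n ⊕ (Fin r ⊕ Fin n)) ℝ :=
  Matrix.fromBlocks h⁻¹ 0 0 (Matrix.fromBlocks 1 0 0 h)

/-- Derivative of `Nmat`. -/
def dNmat {n r : ℕ} (dn₁ : Matrix (Fin n) (Fin r) ℝ) (dn₂ : Matrix (Fin n) (Fin n) ℝ) :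
    Matrix (Fin n ⊕ (Fin r ⊕ Fin n)) (Fin n ⊕ (Fin r ⊕ Fin n)) ℝ :=
  Matrix.fromBlocks 0 0 (Matrix.fromRows dn₁ᵀ dn₂ᵀ) (Matrix.fromBlocks 0 0 (-dn₁) 0)

/-- Derivative of `Amat`. -/
noncomputable def dAmat {n r : ℕ} (dh k : Matrix (Fin n) (Fin n) ℝ) :
    Matrix (Fin n ⊕ (Fin r ⊕ Fin n)) (Fin n ⊕ (Fin r ⊕ Fin n)) ℝ :=
  Matrix.fromBlocks dh 0 0 (Matrix.fromBlocks 0 0 0 k)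

lemma det_entries_diff {k : Type*} [Fintype k] [DecidableEq k] (M : ℝ → Matrix k k ℝ)
    (hM : ∀ i j, Differentiable ℝ fun s => M s i j) :
    Differentiable ℝ fun s => (M s).det := by
  simp only [Matrix.det_apply']
  exact Differentiable.fun_sum fun σ _ =>
    ((Differentiable.fun_finsetProd fun i _ => hM (σ i) i).const_mul _)

lemma inv_entries_diff {k : Type*} [Fintype k] [DecidableEq k] (M : ℝ → Matrix k k ℝ)
    (hM : ∀ i j, Differentiable ℝ fun s => M s i j)
    (hdet : ∀ s, (M s).det ≠ 0) (i j : k) :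
    Differentiable ℝ fun s => (M s)⁻¹ i j := by
  have hadj : Differentiable ℝ fun s => (M s).adjugate i j := by
    simp only [Matrix.adjugate_apply]
    apply det_entries_diff
    intro a b
    simp only [Matrix.updateRow_apply]
    by_cases hab : a = j
    · simp [hab]
    · simpa [hab] using hM a b
  simp only [Matrix.inv_def, Matrix.smul_apply, Ring.inverse_eq_inv', smul_eq_mul]
  exact ((det_entries_diff M hM).inv hdet).mul hadj

lemma mul_entries_diff {m p q : Type*} [Fintype p] (f : ℝ → Matrix m p ℝ) (g : ℝ → Matrix p q ℝ)
    (hf : ∀ i j, Differentiable ℝ fun s => f s i j)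
    (hg : ∀ i j, Differentiable ℝ fun s => g s i j) (i : m) (j : q) :
    Differentiable ℝ fun s => (f s * g s) i j := by
  simp only [Matrix.mul_apply]
  exact Differentiable.fun_sum fun x _ => (hf i x).mul (hg x j)

lemma matDeriv_mul {m p q : Type*} [Fintype p] (f : ℝ → Matrix m p ℝ) (g : ℝ → Matrix p q ℝ)
    (hf : ∀ i j, Differentiable ℝ fun s => f s i j)
    (hg : ∀ i j, Differentiable ℝ fun s => g s i j) (s : ℝ) :
    matDeriv (fun t => f t * g t) s = matDeriv f s * g s + f s * matDeriv g s := by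
  ext i j
  simp only [matDeriv, Matrix.mul_apply, Matrix.of_apply, Matrix.add_apply]
  rw [deriv_fun_sum (A := fun k t => f t i k * g t k j) fun k _ => ((hf i k s).mul (hg k j s))]
  rw [← Finset.sum_add_distrib]
  exact Finset.sum_congr rfl fun k _ => deriv_fun_mul (hf i k s) (hg k j s)

lemma fromRows_add' {m₁ m₂ p : Type*} (A₁ B₁ : Matrix m₁ p ℝ) (A₂ B₂ : Matrix m₂ p ℝ) :
    Matrix.fromRows A₁ A₂ + Matrix.fromRows B₁ B₂ = Matrix.fromRows (A₁ + B₁) (A₂ + B₂) := by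
  ext (i | i) j <;> simp

lemma Nmat_mul_inv {n r : ℕ} (n₁ : Matrix (Fin n) (Fin r) ℝ) (n₂ : Matrix (Fin n) (Fin n) ℝ) :
    Nmat n₁ n₂ * NmatInv n₁ n₂ = 1 := by
  rw [Nmat, NmatInv]
  simp [fromBlocks_multiply, fromBlocks_mul_fromRows, fromRows_add']
  rw [show n₂ᵀ + (n₁ * n₁ᵀ + (-(n₁ * n₁ᵀ) - n₂ᵀ)) = 0 from by abel, Matrix.fromRows_zero]
  simp

lemma Amat_mul_inv {n r : ℕ} (h : Matrix (Fin n) (Fin n) ℝ) (hu : IsUnit h.det) :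
    Amat (r := r) h * AmatInv h = 1 := by
  rw [Amat, AmatInv]
  simp [fromBlocks_multiply, Matrix.mul_nonsing_inv h hu, Matrix.nonsing_inv_mul h hu]

lemma trace_conj_mul {ι : Type*} [Fintype ι] [DecidableEq ι] (Nm Ni P Q : Matrix ι ι ℝ)
    (h : Ni * Nm = 1) :
    ((Nm * (P * Ni)) * (Nm * (Q * Ni))).trace = (P * Q).trace := by
  calc ((Nm * (P * Ni)) * (Nm * (Q * Ni))).trace
      = (Nm * ((P * Q) * Ni)).trace := by
        rw [show (Nm * (P * Ni)) * (Nm * (Q * Ni)) = Nm * (P * ((Ni * Nm) * (Q * Ni))) from by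
          noncomm_ring, h]
        congr 1
        noncomm_ring
    _ = (((P * Q) * Ni) * Nm).trace := Matrix.trace_mul_comm _ _
    _ = ((P * Q) * (Ni * Nm)).trace := by congr 1; noncomm_ring
    _ = (P * Q).trace := by rw [h, Matrix.mul_one]

lemma trace_fromBlocks' {α β : Type*} [Fintype α] [Fintype β]
    (A : Matrix α α ℝ) (B : Matrix α β ℝ) (C : Matrix β α ℝ) (D : Matrix β β ℝ) :
    (Matrix.fromBlocks A B C D).trace = A.trace + D.trace := by
  simp [Matrix.trace, Matrix.diag, Fintype.sum_sum_type]

variable {n r : ℕ} (h dh k n₂ dn₂ : Matrix (Fin n) (Fin n) ℝ) (n₁ dn₁ : Matrix (Fin n) (Fin r) ℝ)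

lemma trace_LL :
    ((NmatInv n₁ n₂ * dNmat dn₁ dn₂) * (NmatInv n₁ n₂ * dNmat dn₁ dn₂)).trace = 0 := by
  simp [NmatInv, dNmat, fromBlocks_multiply, fromBlocks_mul_fromRows, trace_fromBlocks']

lemma trace_UU :
    ((Amat h * ((dNmat dn₁ dn₂)ᵀ * ((NmatInv n₁ n₂)ᵀ * AmatInv h))) *
     (Amat h * ((dNmat dn₁ dn₂)ᵀ * ((NmatInv n₁ n₂)ᵀ * AmatInv h)))).trace = 0 := by
  simp [NmatInv, dNmat, Amat, AmatInv, fromBlocks_multiply, fromBlocks_mul_fromRows,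
    fromBlocks_transpose, transpose_fromRows, fromCols_mul_fromBlocks, trace_fromBlocks']

lemma trace_UD :
    ((Amat h * ((dNmat dn₁ dn₂)ᵀ * ((NmatInv n₁ n₂)ᵀ * AmatInv h))) *
     (dAmat dh k * AmatInv h)).trace = 0 := by
  simp [NmatInv, dNmat, Amat, AmatInv, dAmat, fromBlocks_multiply, fromBlocks_mul_fromRows,
    fromBlocks_transpose, transpose_fromRows, fromCols_mul_fromBlocks, trace_fromBlocks']

lemma trace_DL :
    ((dAmat dh k * AmatInv h) * (NmatInv n₁ n₂ * dNmat dn₁ dn₂)).trace = 0 := by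
  simp [NmatInv, dNmat, AmatInv, dAmat, fromBlocks_multiply, fromBlocks_mul_fromRows,
    trace_fromBlocks']

end Aux

theorem stmt6 (n r : ℕ)
    (h : ℝ → Matrix (Fin n) (Fin n) ℝ)
    (n₁ : ℝ → Matrix (Fin n) (Fin r) ℝ) (n₂ : ℝ → Matrix (Fin n) (Fin n) ℝ)
    (hdiff : ∀ i j, Differentiable ℝ fun s => h s i j)
    (n₁diff : ∀ i j, Differentiable ℝ fun s => n₁ s i j)
    (n₂diff : ∀ i j, Differentiable ℝ fun s => n₂ s i j)
    (hpos : ∀ s, (h s).PosDef) (hsymm : ∀ s, (h s)ᵀ = h s)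
    (hconstr : ∀ s, n₂ s + (n₂ s)ᵀ = -(n₁ s * (n₁ s)ᵀ))
    (N A G : ℝ → Matrix (Fin n ⊕ (Fin r ⊕ Fin n)) (Fin n ⊕ (Fin r ⊕ Fin n)) ℝ)
    (hN : ∀ s, N s = Nmat (n₁ s) (n₂ s)) (hA : ∀ s, A s = Amat (h s))
    (hG : ∀ s, G s = N s * A s * (N s)ᵀ) (s : ℝ) :
    let X₁ := N s * A s * (matDeriv (fun t => (N t)ᵀ) s) * ((N s)ᵀ)⁻¹ * (A s)⁻¹ * (N s)⁻¹
    let X₂ := N s * matDeriv A s * (A s)⁻¹ * (N s)⁻¹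
    let X₃ := matDeriv N s * (N s)⁻¹
    matDeriv G s * (G s)⁻¹ = X₁ + X₂ + X₃ ∧
    (X₁ * X₁).trace = 0 ∧ (X₃ * X₃).trace = 0 ∧
    (X₁ * X₂).trace = 0 ∧ (X₂ * X₃).trace = 0 ∧
    (1 / 2 : ℝ) * (matDeriv G s * (G s)⁻¹ * (matDeriv G s * (G s)⁻¹)).trace =
      (X₁ * X₃).trace + (1 / 2 : ℝ) * (X₂ * X₂).trace := by
  intro X₁ X₂ X₃
  have hX1 : X₁ = N s * A s * (matDeriv (fun t => (N t)ᵀ) s) * ((N s)ᵀ)⁻¹ * (A s)⁻¹ * (N s)⁻¹ :=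
    rfl
  have hX2 : X₂ = N s * matDeriv A s * (A s)⁻¹ * (N s)⁻¹ := rfl
  have hX3 : X₃ = matDeriv N s * (N s)⁻¹ := rfl
  have hdet : ∀ t, (h t).det ≠ 0 := fun t => ((hpos t).det_pos).ne'
  have hu : IsUnit (h s).det := isUnit_iff_ne_zero.mpr (hdet s)
  have hinvd : ∀ i j, Differentiable ℝ fun t => (h t)⁻¹ i j := inv_entries_diff h hdiff hdet
  -- entrywise differentiability
  have hNd : ∀ i j, Differentiable ℝ fun t => N t i j := by
    intro i j
    have e : (fun t => N t i j) = fun t => Nmat (n₁ t) (n₂ t) i j := by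
      funext t; rw [hN]
    rw [e]
    rcases i with i | i | i <;> rcases j with j | j | j <;>
      simp only [Nmat, Matrix.fromBlocks_apply₁₁, Matrix.fromBlocks_apply₁₂,
        Matrix.fromBlocks_apply₂₁, Matrix.fromBlocks_apply₂₂, Matrix.fromRows_apply_inl,
        Matrix.fromRows_apply_inr, Matrix.transpose_apply, Matrix.neg_apply,
        Matrix.zero_apply] <;>
      first
        | exact differentiable_const _
        | exact n₁diff _ _
        | exact n₂diff _ _
        | exact (n₁diff _ _).neg
  have hAd : ∀ i j, Differentiable ℝ fun t => A t i j := by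
    intro i j
    have e : (fun t => A t i j) = fun t => Amat (h t) i j := by
      funext t; rw [hA]
    rw [e]
    rcases i with i | i | i <;> rcases j with j | j | j <;>
      simp only [Amat, Matrix.fromBlocks_apply₁₁, Matrix.fromBlocks_apply₁₂,
        Matrix.fromBlocks_apply₂₁, Matrix.fromBlocks_apply₂₂, Matrix.zero_apply] <;>
      first
        | exact differentiable_const _
        | exact hdiff _ _
        | exact hinvd _ _
  have hNTd : ∀ i j, Differentiable ℝ fun t => (N t)ᵀ i j := fun i j => hNd j i
  -- derivatives
  have hdN : matDeriv N s = dNmat (matDeriv n₁ s) (matDeriv n₂ s) := by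
    rw [show N = fun t => Nmat (n₁ t) (n₂ t) from funext hN]
    ext i j
    rcases i with i | i | i <;> rcases j with j | j | j <;>
      simp [matDeriv, Nmat, dNmat, Matrix.one_apply]
  have hdA : matDeriv A s = dAmat (matDeriv h s) (matDeriv (fun t => (h t)⁻¹) s) := by
    rw [show A = fun t => Amat (h t) from funext hA]
    ext i j
    rcases i with i | i | i <;> rcases j with j | j | j <;>
      simp [matDeriv, Amat, dAmat, Matrix.one_apply]
  have hdNT : matDeriv (fun t => (N t)ᵀ) s = (matDeriv N s)ᵀ := by
    ext i j
    simp [matDeriv]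
  -- inverses
  have hNNi : N s * NmatInv (n₁ s) (n₂ s) = 1 := by rw [hN s]; exact Nmat_mul_inv _ _
  have hNiN : NmatInv (n₁ s) (n₂ s) * N s = 1 := mul_eq_one_comm.mp hNNi
  have hNi : (N s)⁻¹ = NmatInv (n₁ s) (n₂ s) := Matrix.inv_eq_right_inv hNNi
  have hAAi : A s * AmatInv (h s) = 1 := by rw [hA s]; exact Amat_mul_inv _ hu
  have hAi : (A s)⁻¹ = AmatInv (h s) := Matrix.inv_eq_right_inv hAAi
  have hNTi : ((N s)ᵀ)⁻¹ = (NmatInv (n₁ s) (n₂ s))ᵀ := by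
    rw [← Matrix.transpose_nonsing_inv, hNi]
  have hNTNiT : (N s)ᵀ * (NmatInv (n₁ s) (n₂ s))ᵀ = 1 := by
    rw [← Matrix.transpose_mul, hNiN, Matrix.transpose_one]
  have hGi : (G s)⁻¹ =
      (NmatInv (n₁ s) (n₂ s))ᵀ * (AmatInv (h s) * NmatInv (n₁ s) (n₂ s)) := by
    rw [hG s, Matrix.mul_inv_rev, Matrix.mul_inv_rev, hNi, hAi, hNTi]
  -- derivative of G
  have e1 : matDeriv G s =
      matDeriv (fun t => N t * A t) s * (N s)ᵀ + (N s * A s) * matDeriv (fun t => (N t)ᵀ) s := by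
    rw [show G = fun t => (N t * A t) * (N t)ᵀ from funext hG]
    exact matDeriv_mul (fun t => N t * A t) (fun t => (N t)ᵀ)
      (fun i j => mul_entries_diff N A hNd hAd i j) hNTd s
  have e2 : matDeriv (fun t => N t * A t) s = matDeriv N s * A s + N s * matDeriv A s :=
    matDeriv_mul N A hNd hAd s
  have hdG : matDeriv G s =
      matDeriv N s * A s * (N s)ᵀ + N s * matDeriv A s * (N s)ᵀ
        + N s * A s * (matDeriv N s)ᵀ := by
    rw [e1, e2, hdNT]
    noncomm_ring
  -- main identity
  have c1 : ∀ X : Matrix (Fin n ⊕ (Fin r ⊕ Fin n)) (Fin n ⊕ (Fin r ⊕ Fin n)) ℝ,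
      (N s)ᵀ * ((NmatInv (n₁ s) (n₂ s))ᵀ * X) = X := fun X => by
    rw [← Matrix.mul_assoc, hNTNiT, Matrix.one_mul]
  have c2 : ∀ X : Matrix (Fin n ⊕ (Fin r ⊕ Fin n)) (Fin n ⊕ (Fin r ⊕ Fin n)) ℝ,
      A s * (AmatInv (h s) * X) = X := fun X => by
    rw [← Matrix.mul_assoc, hAAi, Matrix.one_mul]
  have hmain : matDeriv G s * (G s)⁻¹ = X₁ + X₂ + X₃ := by
    rw [hX1, hX2, hX3, hdG, hGi, hNi, hAi, hNTi, hdNT]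
    simp only [Matrix.add_mul, Matrix.mul_assoc, c1, c2]
    abel
  -- conjugated forms
  have eX1 : X₁ = N s * ((Amat (h s) *
      ((dNmat (matDeriv n₁ s) (matDeriv n₂ s))ᵀ *
        ((NmatInv (n₁ s) (n₂ s))ᵀ * AmatInv (h s)))) * NmatInv (n₁ s) (n₂ s)) := by
    rw [hX1, hdNT, hdN, hNTi, hAi, hNi, hA s]
    noncomm_ring
  have eX2 : X₂ = N s * ((dAmat (matDeriv h s) (matDeriv (fun t => (h t)⁻¹) s) *
      AmatInv (h s)) * NmatInv (n₁ s) (n₂ s)) := by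
    rw [hX2, hdA, hAi, hNi]
    noncomm_ring
  have eX3 : X₃ = N s * ((NmatInv (n₁ s) (n₂ s) * dNmat (matDeriv n₁ s) (matDeriv n₂ s)) *
      NmatInv (n₁ s) (n₂ s)) := by
    rw [hX3, hdN, hNi,
      show N s * ((NmatInv (n₁ s) (n₂ s) * dNmat (matDeriv n₁ s) (matDeriv n₂ s)) *
          NmatInv (n₁ s) (n₂ s)) =
        (N s * NmatInv (n₁ s) (n₂ s)) *
          (dNmat (matDeriv n₁ s) (matDeriv n₂ s) * NmatInv (n₁ s) (n₂ s)) from by noncomm_ring,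
      hNNi, Matrix.one_mul]
  -- traces
  have t11 : (X₁ * X₁).trace = 0 := by
    rw [eX1, trace_conj_mul _ _ _ _ hNiN]
    apply trace_UU
  have t33 : (X₃ * X₃).trace = 0 := by
    rw [eX3, trace_conj_mul _ _ _ _ hNiN]
    apply trace_LL
  have t12 : (X₁ * X₂).trace = 0 := by
    rw [eX1, eX2, trace_conj_mul _ _ _ _ hNiN]
    apply trace_UD
  have t23 : (X₂ * X₃).trace = 0 := by
    rw [eX2, eX3, trace_conj_mul _ _ _ _ hNiN]
    apply trace_DL
  refine ⟨hmain, t11, t33, t12, t23, ?_⟩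
  rw [hmain]
  have expand : ((X₁ + X₂ + X₃) * (X₁ + X₂ + X₃)).trace =
      (X₁ * X₁).trace + (X₁ * X₂).trace + (X₁ * X₃).trace + (X₂ * X₁).trace +
      (X₂ * X₂).trace + (X₂ * X₃).trace + (X₃ * X₁).trace + (X₃ * X₂).trace +
      (X₃ * X₃).trace := by
    simp only [Matrix.add_mul, Matrix.mul_add, Matrix.trace_add]
    ring
  rw [expand, t11, t33, t12, t23, Matrix.trace_mul_comm X₂ X₁, Matrix.trace_mul_comm X₃ X₂,
    Matrix.trace_mul_comm X₃ X₁, t12, t23]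
  ring
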